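/- Let M be a nonempty matrix over {0,...,k-1} with n rows. Then M is functional in every set if and only if M is functional in the set {0,1}. -/

import Mathlib

/-- `M` is functional in `X`. -/
def Functional {n m k : ℕ} (hk : 0 < k) (M : Fin n → Fin m → Fin k) (X : Type) : Prop :=
  ∀ (f g : Fin k → X) (i i' : Fin n),
    (∀ j : Fin m, f (M i j) = g (M i' j)) → f ⟨0, hk⟩ = g ⟨0, hk⟩

theorem stmt5 {n m k : ℕ} (hk : 0 < k) (hm : 0 < m) (M : Fin n → Fin m → Fin k) :
    (∀ X : Type, Functional hk M X) ↔ Functional hk M (Fin 2) := by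
  constructor
  · intro h; exact h (Fin 2)
  · intro h X f g i i' hfg
    classical
    set f' : Fin k → Fin 2 := fun x => if f x = f ⟨0, hk⟩ then 0 else 1 with hf'
    set g' : Fin k → Fin 2 := fun x => if g x = f ⟨0, hk⟩ then 0 else 1 with hg'
    have := h f' g' i i' (fun j => by simp [hf', hg', hfg j])
    simp [hf', hg'] at this
    exact this.symm
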